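/- Let G₁, G₂, G₃ be the cyclic subgroups of G_{123} generated by a₁, a₂, a₃, let G_{12} and G_{23} be the subgroups of G_{123} generated by {a₁,a₂} and {a₂,a₃} respectively, and let F_{13} be the subgroup of G_{123} generated by {a₁,a₃}. Let t ≥ 1 and let g₁, …, g_t ∈ G_{123} be a Britton-reduced sequence: each g_j ∈ G_{12} ∪ G_{23}, for 1 ≤ j < t the memberships alternate (g_j ∈ G_{12} if and only if g_{j+1} ∈ G_{23}), and if t ≥ 2 then g_j ∉ G₂ for all j. Then g₁·g₂⋯g_t ∈ F_{13} if and only if there exists a sequence h₀, h₁, …, h_t with h₀ = h_t = 1, h_j ∈ G₂ for all j, and for each 1 ≤ j ≤ t there exists g′_j ∈ G₁ ∪ G₃ with h_{j−1}·g_j = g′_j·h_j. -/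

import Mathlib

/-- The relators of the group G_{123} = ⟨a₁, a₂, a₃ ∣ a₂a₁a₂⁻¹ = a₁², a₃a₂a₃⁻¹ = a₂²⟩
(generator of index `i` standing for `a_{i+1}`). The group G_{341} = ⟨a₃, a₄, a₁ ∣
a₄a₃a₄⁻¹ = a₃², a₁a₄a₁⁻¹ = a₄²⟩ has the same presentation, with the generator of
index `0` standing for `a₃`, index `1` for `a₄` and index `2` for `a₁`. -/
def chainRels : Set (FreeGroup (Fin 3)) :=
  {FreeGroup.of 1 * FreeGroup.of 0 * (FreeGroup.of 1)⁻¹ * (FreeGroup.of 0 * FreeGroup.of 0)⁻¹,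
   FreeGroup.of 2 * FreeGroup.of 1 * (FreeGroup.of 2)⁻¹ * (FreeGroup.of 1 * FreeGroup.of 1)⁻¹}

/-- The group G_{123} (and also, under a different reading of the generators, G_{341}). -/
abbrev Gchain : Type := PresentedGroup chainRels

/-- The generators of G_{123} (resp. G_{341}). -/
def cgen (i : Fin 3) : Gchain := PresentedGroup.of i

/-- The cyclic subgroup G₁ = ⟨a₁⟩ of G_{123}. -/
def G1 : Subgroup Gchain := Subgroup.zpowers (cgen 0)

/-- The cyclic subgroup G₂ = ⟨a₂⟩ of G_{123}. -/
def G2 : Subgroup Gchain := Subgroup.zpowers (cgen 1)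

/-- The cyclic subgroup G₃ = ⟨a₃⟩ of G_{123}. -/
def G3 : Subgroup Gchain := Subgroup.zpowers (cgen 2)

/-- The subgroup G_{12} = ⟨a₁, a₂⟩ of G_{123}. -/
def G12 : Subgroup Gchain := Subgroup.closure {cgen 0, cgen 1}

/-- The subgroup G_{23} = ⟨a₂, a₃⟩ of G_{123}. -/
def G23 : Subgroup Gchain := Subgroup.closure {cgen 1, cgen 2}

/-- The (free) subgroup F_{13} = ⟨a₁, a₃⟩ of G_{123}. -/
def F13 : Subgroup Gchain := Subgroup.closure {cgen 0, cgen 2}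

/-- Concrete model of BS(1,2): pairs (q, n) with multiplication (q,n)(q',n') = (q + 2^n q', n+n'). -/
structure QZ where
  q : ℚ
  n : ℤ

namespace QZ

instance : Mul QZ := ⟨fun a b => ⟨a.q + 2 ^ a.n * b.q, a.n + b.n⟩⟩
instance : One QZ := ⟨⟨0, 0⟩⟩
instance : Inv QZ := ⟨fun a => ⟨-(2 ^ (-a.n) * a.q), -a.n⟩⟩

@[simp] lemma mul_def (a b : QZ) : a * b = ⟨a.q + 2 ^ a.n * b.q, a.n + b.n⟩ := rfl
@[simp] lemma one_def : (1 : QZ) = ⟨0, 0⟩ := rfl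
@[simp] lemma inv_def (a : QZ) : a⁻¹ = ⟨-(2 ^ (-a.n) * a.q), -a.n⟩ := rfl

instance : Group QZ where
  mul_assoc a b c := by
    simp only [mul_def, QZ.mk.injEq]
    constructor
    · rw [zpow_add₀ (by norm_num : (2:ℚ) ≠ 0)]; ring
    · ring
  one_mul a := by simp
  mul_one a := by simp
  inv_mul_cancel a := by
    simp only [mul_def, inv_def, one_def, QZ.mk.injEq]
    constructor
    · ring
    · ring

def x : QZ := ⟨1, 0⟩
def y : QZ := ⟨0, 1⟩

lemma x_pow (m : ℕ) : x ^ m = ⟨m, 0⟩ := by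
  induction m with
  | zero => simp
  | succ k ih => rw [pow_succ, ih]; simp only [x, mul_def, QZ.mk.injEq]; constructor <;> push_cast <;> ring

lemma x_zpow (m : ℤ) : x ^ m = ⟨m, 0⟩ := by
  cases m with
  | ofNat k => simpa using x_pow k
  | negSucc k =>
    rw [zpow_negSucc, x_pow]
    simp only [inv_def, QZ.mk.injEq, neg_zero, zpow_zero, one_mul]
    refine ⟨?_, by norm_num⟩; rw [Int.negSucc_eq]; push_cast; ring

lemma y_pow (m : ℕ) : y ^ m = ⟨0, m⟩ := by
  induction m with
  | zero => simp
  | succ k ih => rw [pow_succ, ih]; simp [y]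

lemma y_zpow (m : ℤ) : y ^ m = ⟨0, m⟩ := by
  cases m with
  | ofNat k => simpa using y_pow k
  | negSucc k => rw [zpow_negSucc, y_pow]; simp only [inv_def, QZ.mk.injEq]; refine ⟨by norm_num, ?_⟩; rw [Int.negSucc_eq]; push_cast; ring

lemma rel : y * x * y⁻¹ * (x * x)⁻¹ = 1 := by
  simp [x, y]
  norm_num

end QZ

/-- Relators for BS(1,2) = ⟨u, v | v u v⁻¹ = u²⟩, generator `false` is `u`, `true` is `v`. -/
def bpRels : Set (FreeGroup Bool) :=
  {FreeGroup.of true * FreeGroup.of false * (FreeGroup.of true)⁻¹ *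
    (FreeGroup.of false * FreeGroup.of false)⁻¹}

abbrev Bp : Type := PresentedGroup bpRels

namespace Bp

def u : Bp := PresentedGroup.of false
def v : Bp := PresentedGroup.of true

lemma rel : v * u * v⁻¹ * (u * u)⁻¹ = 1 := by
  have h : ((QuotientGroup.mk (FreeGroup.of true * FreeGroup.of false * (FreeGroup.of true)⁻¹ *
      (FreeGroup.of false * FreeGroup.of false)⁻¹) : Bp) = 1) := by
    rw [QuotientGroup.eq_one_iff]
    exact Subgroup.subset_normalClosure (by simp [bpRels])
  exact h

/-- The representation of `Bp` in the concrete group `QZ`. -/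
def π : Bp →* QZ :=
  PresentedGroup.toGroup (f := fun b => bif b then QZ.y else QZ.x) (by
    intro r hr
    simp only [bpRels, Set.mem_singleton_iff] at hr
    subst hr
    simp only [map_mul, map_inv, FreeGroup.lift_apply_of, cond_true, cond_false]
    exact QZ.rel)

@[simp] lemma π_u : π u = QZ.x := by simp [π, u, PresentedGroup.toGroup.of]
@[simp] lemma π_v : π v = QZ.y := by simp [π, v, PresentedGroup.toGroup.of]

lemma u_zpow_eq_v_zpow {m k : ℤ} (h : u ^ m = v ^ k) : m = 0 ∧ k = 0 := by
  have := congrArg π h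
  rw [map_zpow, map_zpow, π_u, π_v, QZ.x_zpow, QZ.y_zpow] at this
  obtain ⟨h1, h2⟩ := QZ.mk.injEq .. ▸ this
  exact ⟨by exact_mod_cast h1, h2.symm⟩

lemma u_zpow_eq_one {m : ℤ} (h : u ^ m = 1) : m = 0 := by
  have := congrArg π h
  rw [map_zpow, π_u, QZ.x_zpow, map_one] at this
  have : ((m : ℚ)) = 0 := congrArg QZ.q this
  exact_mod_cast this

lemma v_zpow_eq_one {m : ℤ} (h : v ^ m = 1) : m = 0 := by
  have := congrArg π h
  rw [map_zpow, π_v, QZ.y_zpow, map_one] at this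
  exact congrArg QZ.n this

lemma u_zpow_inj : Function.Injective fun m : ℤ => u ^ m := by
  intro a b h
  have : u ^ (a - b) = 1 := by rw [zpow_sub]; simp only at h; rw [h]; group
  have := u_zpow_eq_one this
  omega

lemma v_zpow_inj : Function.Injective fun m : ℤ => v ^ m := by
  intro a b h
  have : v ^ (a - b) = 1 := by rw [zpow_sub]; simp only at h; rw [h]; group
  have := v_zpow_eq_one this
  omega

lemma top_eq_closure : (⊤ : Subgroup Bp) = Subgroup.closure {u, v} := by
  rw [← PresentedGroup.closure_range_of bpRels]
  congr 1
  ext b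
  constructor
  · rintro ⟨i, rfl⟩; cases i
    · exact Or.inl rfl
    · exact Or.inr rfl
  · rintro (rfl | rfl)
    · exact ⟨false, rfl⟩
    · exact ⟨true, rfl⟩

end Bp

open Monoid

/-- The amalgamation maps: `ℤ` maps to `⟨v⟩` in the first (false) copy of `Bp`
(reading `u = a₁, v = a₂`) and to `⟨u⟩` in the second (true) copy (reading `u = a₂, v = a₃`). -/
def φchain : ∀ _ : Bool, Multiplicative ℤ →* Bp := fun i =>
  zpowersHom Bp (bif i then Bp.u else Bp.v)

abbrev Pc : Type := PushoutI φchain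

lemma hφchain : ∀ i, Function.Injective (φchain i) := by
  intro i a b h
  cases i
  · exact Multiplicative.toAdd.injective (Bp.v_zpow_inj h)
  · exact Multiplicative.toAdd.injective (Bp.u_zpow_inj h)

namespace Pc

open PushoutI

/-- Reduced alternating sequences in the pushout. -/
def Red (L : List (Bool × Pc)) : Prop :=
  (∀ p ∈ L, p.2 ∈ (PushoutI.of (φ := φchain) p.1).range ∧ p.2 ∉ (PushoutI.base φchain).range) ∧
    L.IsChain (fun a b => a.1 ≠ b.1)

lemma britton {L : List (Bool × Pc)} (h : Red L) (hne : L ≠ []) :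
    (L.map Prod.snd).prod ∉ (PushoutI.base φchain).range := by
  classical
  -- choose letters
  have hex : ∀ p ∈ L, ∃ b : Bp, PushoutI.of (φ := φchain) p.1 b = p.2 ∧ b ∉ (φchain p.1).range := by
    intro p hp
    obtain ⟨⟨b, hb⟩, hnb⟩ := h.1 p hp
    refine ⟨b, hb, fun ⟨c, hc⟩ => hnb ⟨c, ?_⟩⟩
    rw [← hb, ← hc, of_apply_eq_base]
  set c : Bool × Pc → (Σ _ : Bool, Bp) := fun p =>
    ⟨p.1, if hp : ∃ b : Bp, PushoutI.of (φ := φchain) p.1 b = p.2 ∧ b ∉ (φchain p.1).range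
      then hp.choose else 1⟩ with hc
  have hcs : ∀ p ∈ L, PushoutI.of (φ := φchain) p.1 (c p).2 = p.2 ∧
      (c p).2 ∉ (φchain p.1).range := by
    intro p hp
    have := hex p hp
    simp only [hc, this, dif_pos]
    exact this.choose_spec
  refine fun hbase => ?_
  have hw : ∃ w : CoprodI.Word (fun _ : Bool => Bp), w.toList = L.map c := by
    refine ⟨⟨L.map c, ?_, ?_⟩, rfl⟩
    · intro l hl
      obtain ⟨p, hp, rfl⟩ := List.mem_map.1 hl
      intro h1
      exact (hcs p hp).2 (h1 ▸ one_mem _)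
    · rw [List.isChain_map]
      exact h.2.imp (fun a b hab => by simpa [hc] using hab)
  obtain ⟨w, hwl⟩ := hw
  have hred : Reduced φchain w := by
    intro l hl
    rw [hwl] at hl
    obtain ⟨p, hp, rfl⟩ := List.mem_map.1 hl
    exact (hcs p hp).2
  have hprod : ofCoprodI w.prod = (L.map Prod.snd).prod := by
    rw [CoprodI.Word.prod, hwl, map_list_prod, List.map_map, List.map_map]
    refine congrArg List.prod (List.map_congr_left ?_)
    intro p hp
    simp only [Function.comp_apply, ofCoprodI_of]
    exact (hcs p hp).1
  have := Reduced.eq_empty_of_mem_range hφchain hred (hprod ▸ hbase)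
  rw [this] at hwl
  simp only [CoprodI.Word.empty] at hwl
  exact hne (List.map_eq_nil_iff.1 hwl.symm)

lemma britton_one {L : List (Bool × Pc)} (h : Red L) (hp : (L.map Prod.snd).prod = 1) :
    L = [] := by
  by_contra hne
  exact britton h hne (hp ▸ ⟨1, map_one _⟩)

def invRev (L : List (Bool × Pc)) : List (Bool × Pc) :=
  (L.map fun p => (p.1, p.2⁻¹)).reverse

lemma red_invRev {L : List (Bool × Pc)} (h : Red L) : Red (invRev L) := by
  constructor
  · intro p hp
    rw [invRev, List.mem_reverse, List.mem_map] at hp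
    obtain ⟨q, hq, rfl⟩ := hp
    obtain ⟨h1, h2⟩ := h.1 q hq
    exact ⟨inv_mem h1, fun hbase => h2 (by simpa using inv_mem hbase)⟩
  · rw [invRev, List.isChain_reverse, List.isChain_map]
    exact h.2.imp fun a b hab => Ne.symm hab

lemma prod_invRev (L : List (Bool × Pc)) :
    ((invRev L).map Prod.snd).prod = ((L.map Prod.snd).prod)⁻¹ := by
  rw [List.prod_inv_reverse, invRev, List.map_reverse, List.map_map, List.map_map]
  rfl

lemma red_append {A B : List (Bool × Pc)} (hA : Red A) (hB : Red B)
    (h : ∀ a ∈ A.getLast?, ∀ b ∈ B.head?, a.1 ≠ b.1) : Red (A ++ B) := by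
  constructor
  · intro p hp
    rcases List.mem_append.1 hp with hp | hp
    · exact hA.1 p hp
    · exact hB.1 p hp
  · exact List.isChain_append.2 ⟨hA.2, hB.2, h⟩

lemma red_tail {a : Bool × Pc} {T : List (Bool × Pc)} (h : Red (a :: T)) : Red T :=
  ⟨fun p hp => h.1 p (List.mem_cons_of_mem _ hp), h.2.tail⟩

lemma chain'_fst_head {a b : Bool × Pc} {T : List (Bool × Pc)}
    (h : (b :: T).IsChain (fun p q => p.1 ≠ q.1)) (hab : a.1 = b.1) :
    (a :: T).IsChain (fun p q => p.1 ≠ q.1) := by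
  cases T with
  | nil => simp
  | cons c T =>
    rw [List.isChain_cons_cons] at h ⊢
    exact ⟨hab ▸ h.1, h.2⟩

lemma unique (n : ℕ) : ∀ (M L : List (Bool × Pc)), M.length = n → Red L → Red M →
    (L.map Prod.snd).prod = (M.map Prod.snd).prod →
    L.length = M.length ∧ ∃ h : ℕ → Pc, h 0 = 1 ∧ (∀ j, M.length ≤ j → h j = 1) ∧
      (∀ j, h j ∈ (PushoutI.base φchain).range) ∧
      ∀ j (hj1 : j < M.length) (hj2 : j < L.length),
        h j * (M[j]'hj1).2 = (L[j]'hj2).2 * h (j+1) := by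
  induction n using Nat.strong_induction_on with
  | _ n ih =>
  intro M L hlen hL hM hprod
  rcases M with _ | ⟨m, M'⟩
  · have hL0 : L = [] := britton_one hL (by simpa using hprod)
    subst hL0
    exact ⟨rfl, fun _ => 1, rfl, fun _ _ => rfl, fun _ => one_mem _,
      fun j hj1 _ => by simp at hj1⟩
  rcases L with _ | ⟨l, L'⟩
  · exfalso
    have := britton_one hM (by simpa using hprod.symm)
    simp at this
  -- both lists nonempty
  have hlmem := hL.1 l (List.mem_cons_self)
  have hmmem := hM.1 m (List.mem_cons_self)
  have hfst : l.1 = m.1 := by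
    by_contra hne
    have hgl : ∀ a ∈ (invRev (l :: L')).getLast?, ∀ b ∈ (m :: M').head?, a.1 ≠ b.1 := by
      intro a ha b hb
      rw [invRev, List.getLast?_reverse, List.head?_map] at ha
      simp only [List.head?_cons, Option.mem_def, Option.some.injEq] at ha hb
      subst hb
      obtain ⟨c, hc, rfl⟩ := Option.map_eq_some_iff.1 ha
      simp only [List.head?_cons, Option.some.injEq] at hc
      subst hc
      exact hne
    have hred : Red (invRev (l :: L') ++ (m :: M')) :=
      red_append (red_invRev hL) hM hgl
    have hprod1 : ((invRev (l :: L') ++ (m :: M')).map Prod.snd).prod = 1 := by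
      rw [List.map_append, List.prod_append, prod_invRev, hprod, inv_mul_cancel]
    have := britton_one hred hprod1
    simp at this
  have hLhead : ∀ x ∈ L'.head?, l.1 ≠ x.1 := (List.isChain_cons.1 hL.2).1
  set k := l.2⁻¹ * m.2 with hk
  have hkmem : k ∈ (PushoutI.of (φ := φchain) m.1).range :=
    mul_mem (inv_mem (hfst ▸ hlmem.1)) hmmem.1
  have hprodL : (L'.map Prod.snd).prod = k * ((M').map Prod.snd).prod := by
    have h1 : ((l :: L').map Prod.snd).prod = l.2 * (L'.map Prod.snd).prod := by simp
    have h2 : ((m :: M').map Prod.snd).prod = m.2 * (M'.map Prod.snd).prod := by simp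
    rw [h1, h2] at hprod
    rw [hk, mul_assoc, ← hprod, ← mul_assoc, inv_mul_cancel, one_mul]
  have hkbase : k ∈ (PushoutI.base φchain).range := by
    by_contra hkb
    have hredk : Red ((m.1, k) :: M') := by
      refine ⟨?_, chain'_fst_head hM.2 rfl⟩
      intro p hp
      rcases List.mem_cons.1 hp with rfl | hp
      · exact ⟨hkmem, hkb⟩
      · exact hM.1 p (List.mem_cons_of_mem _ hp)
    have hgl : ∀ a ∈ (invRev L').getLast?, ∀ b ∈ ((m.1, k) :: M').head?, a.1 ≠ b.1 := by
      intro a ha b hb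
      rw [invRev, List.getLast?_reverse, List.head?_map] at ha
      simp only [List.head?_cons, Option.mem_def, Option.some.injEq] at hb
      subst hb
      obtain ⟨c, hc, rfl⟩ := Option.map_eq_some_iff.1 ha
      exact hfst ▸ (hLhead c hc).symm
    have hred : Red (invRev L' ++ ((m.1, k) :: M')) :=
      red_append (red_invRev (red_tail hL)) hredk hgl
    have hprod1 : ((invRev L' ++ ((m.1, k) :: M')).map Prod.snd).prod = 1 := by
      rw [List.map_append, List.prod_append, prod_invRev, hprodL]
      simp only [List.map_cons, List.prod_cons, mul_inv_rev]
      group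
    have := britton_one hred hprod1
    simp at this
  rcases M' with _ | ⟨m', M''⟩
  · -- M = [m]
    have hL' : L' = [] := by
      by_contra hne
      refine britton (red_tail hL) hne ?_
      rw [hprodL]
      simpa using hkbase
    subst hL'
    have hko : k = 1 := by
      have := hprodL
      simp at this
      exact this.symm
    refine ⟨rfl, fun _ => 1, rfl, fun _ _ => rfl, fun _ => one_mem _, ?_⟩
    intro j hj1 hj2
    have hj0 : j = 0 := by simp only [List.length_cons, List.length_nil] at hj1; omega
    subst hj0
    simp only [List.getElem_cons_zero, one_mul, mul_one]
    have : l.2 * k = l.2 * (l.2⁻¹ * m.2) := by rw [hk]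
    rw [hko, mul_one] at this
    rw [this]
    group
  · -- M' = m' :: M''
    set M2 : List (Bool × Pc) := (m'.1, k * m'.2) :: M'' with hM2def
    have hm'mem := hM.1 m' (List.mem_cons_of_mem _ (List.mem_cons_self))
    have hM2 : Red M2 := by
      constructor
      · intro p hp
        rcases List.mem_cons.1 hp with rfl | hp
        · refine ⟨?_, ?_⟩
          · obtain ⟨hb, hhb⟩ := hkbase
            refine mul_mem ?_ hm'mem.1
            rw [← hhb, ← PushoutI.of_apply_eq_base (φ := φchain) m'.1 hb]
            exact ⟨_, rfl⟩
          · intro hmem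
            exact hm'mem.2 (by
              have : m'.2 = k⁻¹ * (k * m'.2) := by group
              rw [this]
              exact mul_mem (inv_mem hkbase) hmem)
        · exact hM.1 p (List.mem_cons_of_mem _ (List.mem_cons_of_mem _ hp))
      · exact chain'_fst_head hM.2.tail rfl
    have hprod2 : (L'.map Prod.snd).prod = (M2.map Prod.snd).prod := by
      rw [hprodL]
      simp [hM2def, mul_assoc]
    obtain ⟨hlen2, h', h'0, h'top, h'base, h'rel⟩ :=
      ih M2.length (by subst hlen; simp only [hM2def, List.length_cons]; omega) M2 L' rfl
        (red_tail hL) hM2 hprod2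
    have hlenM2 : M2.length = M''.length + 1 := by simp [hM2def]
    refine ⟨by simp [hlen2, hlenM2], fun j => match j with
      | 0 => 1
      | Nat.succ jj => if jj = 0 then k else h' jj, rfl, ?_, ?_, ?_⟩
    · intro j hj
      simp only [List.length_cons] at hj
      match j, hj with
      | Nat.succ jj, hj =>
        have hjj : jj ≠ 0 := by omega
        simp only [hjj, if_false]
        exact h'top jj (by omega)
    · intro j
      match j with
      | 0 => exact one_mem _
      | Nat.succ jj =>
        by_cases hjj : jj = 0
        · simp [hjj, hkbase]
        · simp only [hjj, if_false]
          exact h'base jj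
    · intro j hj1 hj2
      match j with
      | 0 =>
        simp only [List.getElem_cons_zero, one_mul]
        show m.2 = l.2 * k
        rw [hk]
        group
      | 1 =>
        simp only [List.getElem_cons_succ, List.getElem_cons_zero]
        show k * m'.2 = (L'[0]'(by simp at hj2 ⊢; omega)).2 * (if 1 = 0 then k else h' 1)
        simp only [if_neg (by omega : (1:ℕ) ≠ 0)]
        have := h'rel 0 (by simp [hlenM2]) (by omega)
        rw [h'0, one_mul] at this
        simpa [hM2def] using this
      | Nat.succ (Nat.succ jj) =>
        simp only [List.getElem_cons_succ]
        have hj1' : jj + 1 < M2.length := by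
          simp only [List.length_cons] at hj1
          omega
        have hj2' : jj + 1 < L'.length := by
          simp only [List.length_cons] at hj2
          omega
        have := h'rel (jj + 1) hj1' hj2'
        have hM2g : (M2[jj+1]'hj1').2 = (M''[jj]'(by simpa [hlenM2] using hj1')).2 := by
          simp [hM2def]
        rw [hM2g] at this
        simp only [if_neg (Nat.succ_ne_zero jj), if_neg (by omega : jj + 1 ≠ 0)]
        exact this


end Pc

open Monoid
namespace Pc
open PushoutI
/-- The letters: `agen false` plays the role of `a₁`, `agen true` of `a₃`. -/
def letterB : Bool → Bp := fun i => bif i then Bp.v else Bp.u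

def agen (i : Bool) : Pc := PushoutI.of (φ := φchain) i (letterB i)

lemma key_letter (i : Bool) (m : ℤ)
    (h : PushoutI.of (φ := φchain) i ((letterB i) ^ m) ∈ (PushoutI.base φchain).range) :
    m = 0 := by
  obtain ⟨b, hb⟩ := h
  rw [← PushoutI.of_apply_eq_base (φ := φchain) i b] at hb
  have := PushoutI.of_injective hφchain i hb.symm
  cases i
  · simp only [letterB, φchain, cond_false, zpowersHom_apply] at this
    exact (Bp.u_zpow_eq_v_zpow (by rw [this])).1
  · simp only [letterB, φchain, cond_true, zpowersHom_apply] at this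
    exact (Bp.u_zpow_eq_v_zpow (this.symm)).2

lemma agen_zpow (i : Bool) (m : ℤ) :
    (agen i) ^ m = PushoutI.of (φ := φchain) i ((letterB i) ^ m) := by
  rw [agen, map_zpow]

lemma zp_agen_base {i : Bool} {p : Pc} (hp : p ∈ Subgroup.zpowers (agen i))
    (hb : p ∈ (PushoutI.base φchain).range) : p = 1 := by
  obtain ⟨m, rfl⟩ := Subgroup.mem_zpowers_iff.1 hp
  rw [agen_zpow] at hb ⊢
  rw [key_letter i m hb]
  simp

lemma zp_agen_of {i : Bool} {p : Pc} (hp : p ∈ Subgroup.zpowers (agen i)) :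
    p ∈ (PushoutI.of (φ := φchain) i).range := by
  obtain ⟨m, rfl⟩ := Subgroup.mem_zpowers_iff.1 hp
  rw [agen_zpow]
  exact ⟨_, rfl⟩

def NFP : Set Pc :=
  {p | ∃ L, Red L ∧ (∀ q ∈ L, q.2 ∈ Subgroup.zpowers (agen q.1)) ∧ (L.map Prod.snd).prod = p}

lemma one_mem_NFP : (1 : Pc) ∈ NFP := ⟨[], ⟨by simp, by simp⟩, by simp, rfl⟩

set_option maxHeartbeats 1000000 in
lemma nfp_mul (i : Bool) (m : ℤ) {c : Pc} (hc : c ∈ NFP) : (agen i) ^ m * c ∈ NFP := by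
  by_cases hm : m = 0
  · simpa [hm] using hc
  obtain ⟨L, hred, hzp, hprod⟩ := hc
  rcases L with _ | ⟨⟨j, q⟩, tl⟩
  · refine ⟨[(i, (agen i) ^ m)], ⟨?_, by simp⟩, ?_, ?_⟩
    · intro p hp
      rcases List.mem_cons.1 hp with rfl | hp
      · refine ⟨zp_agen_of (Subgroup.zpow_mem _ (Subgroup.mem_zpowers _) m), fun hb => ?_⟩
        exact hm (key_letter i m (by rwa [← agen_zpow]))
      · simp at hp
    · intro p hp
      rcases List.mem_cons.1 hp with rfl | hp
      · exact Subgroup.zpow_mem _ (Subgroup.mem_zpowers _) m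
      · simp at hp
    · simp at hprod
      simp [← hprod]
  · by_cases hij : j = i
    · subst hij
      have hq' : q ∈ Subgroup.zpowers (agen j) := hzp (j, q) (List.mem_cons_self)
      have hpow : (agen j : Pc) ^ m ∈ Subgroup.zpowers (agen j) :=
        Subgroup.zpow_mem _ (Subgroup.mem_zpowers _) m
      have hmul : (agen j : Pc) ^ m * q ∈ Subgroup.zpowers (agen j) := mul_mem hpow hq'
      by_cases hqb : (agen j) ^ m * q ∈ (PushoutI.base φchain).range
      · have h1 : (agen j) ^ m * q = 1 := zp_agen_base hmul hqb
        refine ⟨tl, red_tail hred, fun p hp => hzp p (List.mem_cons_of_mem _ hp), ?_⟩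
        rw [← hprod]
        simp only [List.map_cons, List.prod_cons, ← mul_assoc, h1, one_mul]
      · refine ⟨(j, (agen j) ^ m * q) :: tl, ⟨?_, chain'_fst_head hred.2 rfl⟩, ?_, ?_⟩
        · intro p hp
          rcases List.mem_cons.1 hp with rfl | hp
          · exact ⟨zp_agen_of hmul, hqb⟩
          · exact hred.1 p (List.mem_cons_of_mem _ hp)
        · intro p hp
          rcases List.mem_cons.1 hp with rfl | hp
          · exact hmul
          · exact hzp p (List.mem_cons_of_mem _ hp)
        · rw [← hprod]
          simp [mul_assoc]
    · refine ⟨(i, (agen i) ^ m) :: (j, q) :: tl, ⟨?_, ?_⟩, ?_, ?_⟩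
      · intro p hp
        rcases List.mem_cons.1 hp with rfl | hp
        · refine ⟨zp_agen_of (Subgroup.zpow_mem _ (Subgroup.mem_zpowers _) m), fun hb => ?_⟩
          exact hm (key_letter i m (by rwa [← agen_zpow]))
        · exact hred.1 p hp
      · exact List.isChain_cons_cons.2 ⟨fun h => hij h.symm, hred.2⟩
      · intro p hp
        rcases List.mem_cons.1 hp with rfl | hp
        · exact Subgroup.zpow_mem _ (Subgroup.mem_zpowers _) m
        · exact hzp p hp
      · rw [← hprod]
        simp [mul_assoc]

lemma F'_decomp {p : Pc} (hp : p ∈ Subgroup.closure {agen false, agen true}) : p ∈ NFP := by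
  have hp' : p ∈ Submonoid.closure ({agen false, agen true} ∪ {agen false, agen true}⁻¹) := by
    rw [← Subgroup.closure_toSubmonoid]
    exact hp
  have main : ∀ c ∈ NFP, p * c ∈ NFP := by
    refine Submonoid.closure_induction (fun z hz => ?_) (by simpa using fun c hc => hc)
      (fun a b _ _ ha hb c hc => by rw [mul_assoc]; exact ha _ (hb c hc)) hp'
    rcases hz with (rfl | rfl) | hz
    · exact fun c hc => by simpa using nfp_mul false 1 hc
    · exact fun c hc => by simpa using nfp_mul true 1 hc
    · rw [Set.mem_inv] at hz
      rcases hz with hz | hz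
      · intro c hc
        have hzeq : z = (agen false) ^ (-1 : ℤ) := by rw [zpow_neg_one, ← hz, inv_inv]
        rw [hzeq]
        exact nfp_mul false (-1) hc
      · intro c hc
        have hzeq : z = (agen true) ^ (-1 : ℤ) := by rw [zpow_neg_one, ← hz, inv_inv]
        rw [hzeq]
        exact nfp_mul true (-1) hc
  simpa using main 1 one_mem_NFP

end Pc

open Monoid

namespace Pc

open PushoutI

lemma of_false_v_eq : (PushoutI.of (φ := φchain) false Bp.v : Pc) =
    PushoutI.of (φ := φchain) true Bp.u := by
  have h1 : Bp.v = φchain false (Multiplicative.ofAdd 1) := by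
    simp [φchain, zpowersHom_apply]
  have h2 : Bp.u = φchain true (Multiplicative.ofAdd 1) := by
    simp [φchain, zpowersHom_apply]
  rw [h1, h2, PushoutI.of_apply_eq_base, PushoutI.of_apply_eq_base]

lemma base_ofAdd_one : PushoutI.base φchain (Multiplicative.ofAdd 1) =
    PushoutI.of (φ := φchain) false Bp.v := by
  rw [← PushoutI.of_apply_eq_base (φ := φchain) false]
  simp [φchain, zpowersHom_apply]

def fchain : Fin 3 → Pc :=
  ![PushoutI.of (φ := φchain) false Bp.u, PushoutI.of (φ := φchain) false Bp.v,
    PushoutI.of (φ := φchain) true Bp.v]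

lemma fchain_rels : ∀ r ∈ chainRels, FreeGroup.lift fchain r = 1 := by
  intro r hr
  rcases hr with rfl | rfl
  · have : FreeGroup.lift fchain (FreeGroup.of 1 * FreeGroup.of 0 * (FreeGroup.of 1)⁻¹ *
        (FreeGroup.of 0 * FreeGroup.of 0)⁻¹) =
        PushoutI.of (φ := φchain) false (Bp.v * Bp.u * Bp.v⁻¹ * (Bp.u * Bp.u)⁻¹) := by
      simp [map_mul, map_inv, FreeGroup.lift_apply_of, fchain]
    rw [this, Bp.rel, map_one]
  · have : FreeGroup.lift fchain (FreeGroup.of 2 * FreeGroup.of 1 * (FreeGroup.of 2)⁻¹ *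
        (FreeGroup.of 1 * FreeGroup.of 1)⁻¹) =
        PushoutI.of (φ := φchain) true (Bp.v * Bp.u * Bp.v⁻¹ * (Bp.u * Bp.u)⁻¹) := by
      simp only [map_mul, map_inv, FreeGroup.lift_apply_of, fchain]
      simp only [Matrix.cons_val_zero, Matrix.cons_val_one, Matrix.head_cons, Matrix.cons_val_two, Matrix.tail_cons]
      rw [of_false_v_eq]
    rw [this, Bp.rel, map_one]

/-- The canonical map `Gchain →* Pc`. -/
def toP : Gchain →* Pc := PresentedGroup.toGroup fchain_rels

lemma crel1 : cgen 1 * cgen 0 * (cgen 1)⁻¹ * (cgen 0 * cgen 0)⁻¹ = 1 := by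
  have h : ((QuotientGroup.mk (FreeGroup.of (1 : Fin 3) * FreeGroup.of 0 * (FreeGroup.of 1)⁻¹ *
      (FreeGroup.of 0 * FreeGroup.of 0)⁻¹) : Gchain) = 1) := by
    rw [QuotientGroup.eq_one_iff]
    exact Subgroup.subset_normalClosure (by simp [chainRels])
  exact h

lemma crel2 : cgen 2 * cgen 1 * (cgen 2)⁻¹ * (cgen 1 * cgen 1)⁻¹ = 1 := by
  have h : ((QuotientGroup.mk (FreeGroup.of (2 : Fin 3) * FreeGroup.of 1 * (FreeGroup.of 2)⁻¹ *
      (FreeGroup.of 1 * FreeGroup.of 1)⁻¹) : Gchain) = 1) := by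
    rw [QuotientGroup.eq_one_iff]
    refine Subgroup.subset_normalClosure ?_
    right
    rfl
  exact h

/-- `Bp →* Gchain` reading `u = a₁, v = a₂`. -/
def ψf : Bp →* Gchain := PresentedGroup.toGroup (f := fun b => bif b then cgen 1 else cgen 0) (by
  intro r hr
  rw [bpRels, Set.mem_singleton_iff] at hr
  subst hr
  simp only [map_mul, map_inv, FreeGroup.lift_apply_of, cond_true, cond_false]
  exact crel1)

/-- `Bp →* Gchain` reading `u = a₂, v = a₃`. -/
def ψt : Bp →* Gchain := PresentedGroup.toGroup (f := fun b => bif b then cgen 2 else cgen 1) (by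
  intro r hr
  rw [bpRels, Set.mem_singleton_iff] at hr
  subst hr
  simp only [map_mul, map_inv, FreeGroup.lift_apply_of, cond_true, cond_false]
  exact crel2)

lemma comp_ok : ∀ i, ((bif i then ψt else ψf).comp (φchain i)) = zpowersHom Gchain (cgen 1) := by
  intro i
  ext
  cases i <;>
    simp [φchain, zpowersHom_apply, ψf, ψt, PresentedGroup.toGroup.of, Bp.u, Bp.v]

/-- The canonical map `Pc →* Gchain`. -/
def toG : Pc →* Gchain :=
  PushoutI.lift (fun i => bif i then ψt else ψf) (zpowersHom Gchain (cgen 1)) comp_ok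

@[simp] lemma toP_cgen0 : toP (cgen 0) = PushoutI.of (φ := φchain) false Bp.u := by
  simp [toP, cgen, PresentedGroup.toGroup.of, fchain]

@[simp] lemma toP_cgen1 : toP (cgen 1) = PushoutI.of (φ := φchain) false Bp.v := by
  simp [toP, cgen, PresentedGroup.toGroup.of, fchain]

@[simp] lemma toP_cgen2 : toP (cgen 2) = PushoutI.of (φ := φchain) true Bp.v := by
  simp [toP, cgen, PresentedGroup.toGroup.of, fchain]

@[simp] lemma toG_of_false_u : toG (PushoutI.of (φ := φchain) false Bp.u) = cgen 0 := by
  simp [toG, PushoutI.lift_of, ψf, Bp.u, PresentedGroup.toGroup.of]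

@[simp] lemma toG_of_false_v : toG (PushoutI.of (φ := φchain) false Bp.v) = cgen 1 := by
  simp [toG, PushoutI.lift_of, ψf, Bp.v, PresentedGroup.toGroup.of]

@[simp] lemma toG_of_true_u : toG (PushoutI.of (φ := φchain) true Bp.u) = cgen 1 := by
  simp [toG, PushoutI.lift_of, ψt, Bp.u, PresentedGroup.toGroup.of]

@[simp] lemma toG_of_true_v : toG (PushoutI.of (φ := φchain) true Bp.v) = cgen 2 := by
  simp [toG, PushoutI.lift_of, ψt, Bp.v, PresentedGroup.toGroup.of]

lemma toG_toP (g : Gchain) : toG (toP g) = g := by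
  have h : toG.comp toP = MonoidHom.id Gchain := by
    apply PresentedGroup.ext
    intro x
    fin_cases x <;>
      simp only [MonoidHom.comp_apply, MonoidHom.id_apply] <;>
      rw [show (PresentedGroup.of _ : Gchain) = cgen _ from rfl] <;>
      simp
  exact DFunLike.congr_fun h g

lemma toP_toG (p : Pc) : toP (toG p) = p := by
  have h : toP.comp toG = MonoidHom.id Pc := by
    apply PushoutI.hom_ext_nonempty
    intro i
    apply PresentedGroup.ext
    intro b
    cases i <;> cases b <;>
      simp only [MonoidHom.comp_apply, MonoidHom.id_apply] <;>
      rw [show (PushoutI.of (φ := φchain) _ (PresentedGroup.of _) : Pc) =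
        PushoutI.of (φ := φchain) _ _ from rfl]
    · rw [show (PresentedGroup.of false : Bp) = Bp.u from rfl]
      simp
    · rw [show (PresentedGroup.of true : Bp) = Bp.v from rfl]
      simp
    · rw [show (PresentedGroup.of false : Bp) = Bp.u from rfl]
      rw [toG_of_true_u, toP_cgen1, of_false_v_eq]
    · rw [show (PresentedGroup.of true : Bp) = Bp.v from rfl]
      simp
  exact DFunLike.congr_fun h p

lemma toP_injective : Function.Injective toP := by
  intro a b h
  rw [← toG_toP a, ← toG_toP b, h]

end Pc

open Monoid

namespace Pc

open PushoutI

lemma ofAdd_one_zpow (k : ℤ) :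
    (Multiplicative.ofAdd (1 : ℤ)) ^ k = Multiplicative.ofAdd k := by
  rw [← ofAdd_zsmul]
  norm_num

lemma base_range_eq : (PushoutI.base φchain).range =
    Subgroup.zpowers (PushoutI.of (φ := φchain) false Bp.v) := by
  ext p
  constructor
  · rintro ⟨h, rfl⟩
    refine Subgroup.mem_zpowers_iff.2 ⟨h.toAdd, ?_⟩
    rw [← base_ofAdd_one, ← map_zpow, ofAdd_one_zpow]
    simp
  · intro hp
    obtain ⟨k, rfl⟩ := Subgroup.mem_zpowers_iff.1 hp
    exact ⟨Multiplicative.ofAdd k, by rw [← base_ofAdd_one, ← map_zpow, ofAdd_one_zpow]⟩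

lemma map_G1 : G1.map toP = Subgroup.zpowers (agen false) := by
  rw [G1, MonoidHom.map_zpowers, toP_cgen0]
  rfl

lemma map_G3 : G3.map toP = Subgroup.zpowers (agen true) := by
  rw [G3, MonoidHom.map_zpowers, toP_cgen2]
  rfl

lemma map_G2 : G2.map toP = (PushoutI.base φchain).range := by
  rw [G2, MonoidHom.map_zpowers, toP_cgen1, base_range_eq]

lemma map_G12 : G12.map toP = (PushoutI.of (φ := φchain) false).range := by
  rw [G12, MonoidHom.map_closure, Set.image_pair, toP_cgen0, toP_cgen1,
    MonoidHom.range_eq_map, Bp.top_eq_closure, MonoidHom.map_closure, Set.image_pair]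

lemma map_G23 : G23.map toP = (PushoutI.of (φ := φchain) true).range := by
  rw [G23, MonoidHom.map_closure, Set.image_pair, toP_cgen1, toP_cgen2, of_false_v_eq,
    MonoidHom.range_eq_map, Bp.top_eq_closure, MonoidHom.map_closure, Set.image_pair]

lemma map_F13 : F13.map toP = Subgroup.closure {agen false, agen true} := by
  rw [F13, MonoidHom.map_closure, Set.image_pair, toP_cgen0, toP_cgen2]
  rfl

lemma mem_iff_toP {S : Subgroup Gchain} {T : Subgroup Pc} (h : S.map toP = T) {x : Gchain} :
    x ∈ S ↔ toP x ∈ T := by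
  subst h
  constructor
  · exact fun hx => Subgroup.mem_map_of_mem _ hx
  · rintro ⟨y, hy, he⟩
    rwa [← toP_injective he]

lemma toG_mem {S : Subgroup Gchain} {T : Subgroup Pc} (hST : S.map toP = T) {p : Pc}
    (hp : p ∈ T) : toG p ∈ S := by
  subst hST
  obtain ⟨y, hy, rfl⟩ := hp
  rwa [toG_toP]

lemma g12_inf_g23 {x : Gchain} (h1 : x ∈ G12) (h2 : x ∈ G23) : x ∈ G2 := by
  refine (mem_iff_toP map_G2).2 ?_
  have hinf := PushoutI.inf_of_range_eq_base_range hφchain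
    (show (false : Bool) ≠ true by simp)
  rw [← hinf, Subgroup.mem_inf]
  exact ⟨(mem_iff_toP map_G12).1 h1, (mem_iff_toP map_G23).1 h2⟩

end Pc

open Monoid

/-- Let `g₁, …, g_t` (here `g 0, …, g (t-1)`) be a Britton-reduced sequence
in G_{123}: every `g_j ∈ G_{12} ∪ G_{23}`, consecutive elements alternate between `G_{12}` and
`G_{23}`, and (if `t ≥ 2`) no `g_j` lies in `G₂`. Then `g₁⋯g_t ∈ F_{13}` if and only if there
is a sequence `h₀, …, h_t` with `h₀ = h_t = 1`, all `h_j ∈ G₂`, and such that each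
`h_{j−1}·g_j` can be written as `g′_j·h_j` with `g′_j ∈ G₁ ∪ G₃`. -/
theorem britton_reduced_mem_F13_iff
    (t : ℕ) (ht : 1 ≤ t) (g : ℕ → Gchain)
    (hmem : ∀ j < t, g j ∈ (G12 : Set Gchain) ∪ (G23 : Set Gchain))
    (halt : ∀ j, j + 1 < t → (g j ∈ G12 ↔ g (j + 1) ∈ G23))
    (hred : 2 ≤ t → ∀ j < t, g j ∉ G2) :
    ((List.range t).map g).prod ∈ F13 ↔
      ∃ h : ℕ → Gchain, h 0 = 1 ∧ h t = 1 ∧ (∀ j ≤ t, h j ∈ G2) ∧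
        ∀ j < t, ∃ g' ∈ (G1 : Set Gchain) ∪ (G3 : Set Gchain),
          h j * g j = g' * h (j + 1) := by
  classical
  constructor
  · intro hp
    obtain ⟨L, hLred, hLzp, hLprod⟩ := Pc.F'_decomp ((Pc.mem_iff_toP Pc.map_F13).1 hp)
    by_cases hA : t = 1 ∧ g 0 ∈ G2
    · obtain ⟨rfl, hg0⟩ := hA
      have hprod1 : ((List.range 1).map g).prod = g 0 := by
        rw [show List.range 1 = [0] from rfl]
        simp
      have hLnil : L = [] := by
        by_contra hne
        refine Pc.britton hLred hne ?_
        rw [hLprod, hprod1]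
        exact (Pc.mem_iff_toP Pc.map_G2).1 hg0
      have hg01 : g 0 = 1 := by
        refine Pc.toP_injective ?_
        rw [← hprod1, ← hLprod, hLnil]
        simp
      refine ⟨fun _ => 1, rfl, rfl, fun j _ => one_mem _, ?_⟩
      intro j hj
      have hj0 : j = 0 := by omega
      subst hj0
      exact ⟨1, Set.mem_union_left _ (one_mem G1), by rw [hg01]⟩
    · have hng : ∀ j < t, g j ∉ G2 := by
        intro j hj
        rcases Nat.lt_or_ge t 2 with h2 | h2
        · have ht1 : t = 1 := by omega
          have hj0 : j = 0 := by omega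
          subst hj0
          exact fun hmem2 => hA ⟨ht1, hmem2⟩
        · exact hred h2 j hj
      set ty : ℕ → Bool := fun j => if g j ∈ G12 then false else true with hty
      have hty_mem : ∀ j < t, Pc.toP (g j) ∈ (PushoutI.of (φ := φchain) (ty j)).range := by
        intro j hj
        by_cases hj12 : g j ∈ G12
        · rw [hty]
          simp only [hj12, if_pos]
          exact (Pc.mem_iff_toP Pc.map_G12).1 hj12
        · have hj23 : g j ∈ G23 := by
            rcases hmem j hj with h | h
            · exact absurd h hj12
            · exact h
          rw [hty]
          simp only [hj12, if_neg, if_false]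
          exact (Pc.mem_iff_toP Pc.map_G23).1 hj23
      have hty_base : ∀ j < t, Pc.toP (g j) ∉ (PushoutI.base φchain).range :=
        fun j hj hb => hng j hj ((Pc.mem_iff_toP Pc.map_G2).2 hb)
      have htyne : ∀ j, j + 1 < t → ty j ≠ ty (j + 1) := by
        intro j hj
        by_cases hj12 : g j ∈ G12
        · have h23 : g (j + 1) ∈ G23 := (halt j hj).1 hj12
          have h12 : g (j + 1) ∉ G12 := fun h => hng (j + 1) (by omega) (Pc.g12_inf_g23 h h23)
          simp [hty, hj12, h12]
        · have h12 : g (j + 1) ∈ G12 := by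
            rcases hmem (j + 1) (by omega) with h | h
            · exact h
            · exact absurd ((halt j hj).2 h) hj12
          simp [hty, hj12, h12]
      set M : List (Bool × Pc) := (List.range t).map (fun j => (ty j, Pc.toP (g j))) with hM
      have hMlen : M.length = t := by simp [hM]
      have hMred : Pc.Red M := by
        constructor
        · intro p hp'
          rw [hM, List.mem_map] at hp'
          obtain ⟨j, hj, rfl⟩ := hp'
          rw [List.mem_range] at hj
          exact ⟨hty_mem j hj, hty_base j hj⟩
        · rw [hM, List.isChain_map]
          rcases t with _ | s
          · simp
          · exact (List.isChain_range_succ _ s).2 (fun m hm => htyne m (by omega))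
      have hMprod : (M.map Prod.snd).prod = Pc.toP (((List.range t).map g).prod) := by
        rw [hM, List.map_map, map_list_prod, List.map_map]
        rfl
      obtain ⟨hlen, h', h'0, h'top, h'base, h'rel⟩ :=
        Pc.unique M.length M L rfl hLred hMred (by rw [hLprod, hMprod])
      refine ⟨fun j => Pc.toG (h' j), by show Pc.toG (h' 0) = 1; rw [h'0, map_one], ?_, ?_, ?_⟩
      · show Pc.toG (h' t) = 1
        rw [h'top t (le_of_eq hMlen), map_one]
      · intro j _
        exact Pc.toG_mem Pc.map_G2 (h'base j)
      · intro j hj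
        have hj1 : j < M.length := by omega
        have hj2 : j < L.length := by omega
        have hrel := h'rel j hj1 hj2
        have hMj : (M[j]'hj1).2 = Pc.toP (g j) := by
          simp [hM]
        refine ⟨Pc.toG ((L[j]'hj2).2), ?_, ?_⟩
        · have hzpj := hLzp (L[j]'hj2) (List.getElem_mem hj2)
          rcases Bool.dichotomy ((L[j]'hj2).1) with hb | hb
          · rw [hb] at hzpj
            exact Set.mem_union_left _ (Pc.toG_mem Pc.map_G1 hzpj)
          · rw [hb] at hzpj
            exact Set.mem_union_right _ (Pc.toG_mem Pc.map_G3 hzpj)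
        · apply Pc.toP_injective
          show Pc.toP (Pc.toG (h' j) * g j) =
            Pc.toP (Pc.toG ((L[j]'hj2).2) * Pc.toG (h' (j + 1)))
          simp only [map_mul, Pc.toP_toG]
          rw [← hMj]
          exact hrel
  · rintro ⟨h, h0, htt, hG2, hrel⟩
    have main : ∀ n ≤ t, ∃ q ∈ F13, ((List.range n).map g).prod = q * h n := by
      intro n
      induction n with
      | zero => exact fun _ => ⟨1, one_mem _, by simp [h0]⟩
      | succ k ihk =>
        intro hk
        obtain ⟨q, hq, hqe⟩ := ihk (by omega)
        obtain ⟨g', hg', hge⟩ := hrel k (by omega)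
        refine ⟨q * g', mul_mem hq ?_, ?_⟩
        · rcases hg' with hg' | hg'
          · exact (Subgroup.zpowers_le.2 (Subgroup.subset_closure (by left; rfl))) hg'
          · exact (Subgroup.zpowers_le.2 (Subgroup.subset_closure (by right; rfl))) hg'
        · rw [List.range_succ, List.map_append, List.prod_append]
          simp only [List.map_cons, List.map_nil, List.prod_cons, List.prod_nil, mul_one]
          rw [hqe, mul_assoc, hge, ← mul_assoc]
    obtain ⟨q, hq, hqe⟩ := main t le_rfl
    rw [hqe, htt, mul_one]
    exact hq
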